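/- Let 𝒲 be an efficient removal pattern with removal set R = R(𝒲), and assume U ≠ ∅. Then g_p^𝒲(V) ≥ (1/2)·(c(R)/c(U))·val(U) − 2^p. -/

import Mathlib

namespace MSTInterdiction

/-- A finite undirected loopless multigraph on vertex type `V` with edge type `E`:
each edge has two distinct endpoints (parallel edges allowed). -/
structure Multigraph (V : Type*) (E : Type*) where
  fst : E → V
  snd : E → V
  loopless : ∀ e, fst e ≠ snd e

variable {V E : Type*}

/-- Adjacency relation using only the edges in `U`. -/
def Multigraph.rel (G : Multigraph V E) (U : Set E) (x y : V) : Prop :=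
  ∃ e ∈ U, (G.fst e = x ∧ G.snd e = y) ∨ (G.fst e = y ∧ G.snd e = x)

/-- The graph `(V, U)` is connected. -/
def Multigraph.Connects (G : Multigraph V E) (U : Set E) : Prop :=
  ∀ x y : V, Relation.EqvGen (G.rel U) x y

/-- `σ(U)`: the number of connected components of `(V, U)`. -/
noncomputable def Multigraph.sigma (G : Multigraph V E) (U : Set E) : ℕ :=
  Nat.card (Quotient (Relation.EqvGen.setoid (G.rel U)))

/-- Total cost (or weight) of a set of edges. -/
noncomputable def setSum (c : E → ℕ) (U : Set E) : ℕ := ∑ᶠ e ∈ U, c e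

/-- `val(U)`: the weight of a minimum spanning tree of `(V, E ∖ U)`, i.e. the minimum
of `∑_{e ∈ T} w e` over `T ⊆ E ∖ U` with `(V, T)` connected. -/
noncomputable def Multigraph.val (G : Multigraph V E) (w : E → ℕ) (U : Set E) : ℕ :=
  sInf {n | ∃ T : Set E, T ⊆ Uᶜ ∧ G.Connects T ∧ setSum w T = n}

/-- `E_{≤ i}`: edges of weight `0` or of weight `2^ℓ` for some natural `ℓ ≤ i`.
In particular `Ele w (-1) = E_{-1}` is the set of edges of weight `0`. -/
def Ele (w : E → ℕ) (i : ℤ) : Set E :=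
  {e | w e = 0 ∨ ∃ ℓ : ℕ, (ℓ : ℤ) ≤ i ∧ w e = 2 ^ ℓ}

/-- The connected component of vertex `v` in the graph `(V, S)`. -/
def Multigraph.component (G : Multigraph V E) (S : Set E) (v : V) : Set V :=
  {u | Relation.EqvGen (G.rel S) v u}

/-- The partition of `V` into the connected components of `(V, S)`. -/
def Multigraph.parts (G : Multigraph V E) (S : Set E) : Set (Set V) :=
  {A | ∃ v : V, A = G.component S v}

/-- Edge `e` has exactly one endpoint in `A`. -/
def Multigraph.oneEnd (G : Multigraph V E) (A : Set V) (e : E) : Prop :=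
  (G.fst e ∈ A ∧ G.snd e ∉ A) ∨ (G.fst e ∉ A ∧ G.snd e ∈ A)

/-- Edge `e` has both endpoints in `A`. -/
def Multigraph.twoEnds (G : Multigraph V E) (A : Set V) (e : E) : Prop :=
  G.fst e ∈ A ∧ G.snd e ∈ A


section Patterns

variable [Fintype V] [Fintype E]

/-- The auxiliary cost `κ_i(A)`: the cost of edges of `U_{≤i} = U ∩ E_{≤i}` with exactly
one endpoint in `A`, plus twice the cost of those with both endpoints in `A`. -/
noncomputable def kappa (G : Multigraph V E) (w c : E → ℕ) (U : Set E)
    (i : ℤ) (A : Set V) : ℕ :=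
  setSum c {e | e ∈ U ∩ Ele w i ∧ G.oneEnd A e}
    + 2 * setSum c {e | e ∈ U ∩ Ele w i ∧ G.twoEnds A e}

/-- The auxiliary impact `g_i(A) = |{D ∈ 𝒜_{−1} : D ⊆ A}| + Σ_{ℓ=0}^{i} 2^ℓ·|{D ∈ 𝒜_ℓ : D ⊆ A}|`,
where `𝒜_ℓ` is the partition of `V` into connected components of `(V, E_{≤ℓ} ∖ U)`. -/
noncomputable def gfun (G : Multigraph V E) (w : E → ℕ) (U : Set E)
    (i : ℤ) (A : Set V) : ℕ :=
  Nat.card {D : Set V | D ∈ G.parts (Ele w (-1) \ U) ∧ D ⊆ A}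
    + ∑ ℓ ∈ Finset.range (i + 1).toNat,
        2 ^ ℓ * Nat.card {D : Set V | D ∈ G.parts (Ele w (ℓ : ℤ) \ U) ∧ D ⊆ A}

/-- A removal pattern: a finite family of tuples `(W, i)` with `i ∈ {−1, …, p−1}`,
`W ∈ 𝒜_i`, and the sets `W` pairwise disjoint. -/
structure IsRemovalPattern (G : Multigraph V E) (w : E → ℕ) (U : Set E) (p : ℕ)
    (𝒲 : Set (Set V × ℤ)) : Prop where
  finite : 𝒲.Finite
  levels : ∀ x ∈ 𝒲, -1 ≤ x.2 ∧ x.2 ≤ (p : ℤ) - 1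
  parts : ∀ x ∈ 𝒲, x.1 ∈ G.parts (Ele w x.2 \ U)
  disjoint : ∀ x ∈ 𝒲, ∀ y ∈ 𝒲, x ≠ y → Disjoint x.1 y.1

/-- The removal set `R(𝒲) = ⋃_{(W,i) ∈ 𝒲} {e ∈ U_{≤i} : exactly one endpoint of e in W}`. -/
def removalSet (G : Multigraph V E) (w : E → ℕ) (U : Set E)
    (𝒲 : Set (Set V × ℤ)) : Set E :=
  {e | ∃ x ∈ 𝒲, e ∈ U ∩ Ele w x.2 ∧ G.oneEnd x.1 e}

/-- `κ_i^𝒲(A) = Σ κ_j(W)` over `(W,j) ∈ 𝒲` with `W ⊆ A` and `j ≤ i`. -/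
noncomputable def kappaW (G : Multigraph V E) (w c : E → ℕ) (U : Set E)
    (𝒲 : Set (Set V × ℤ)) (i : ℤ) (A : Set V) : ℕ :=
  ∑ᶠ x ∈ {x ∈ 𝒲 | x.1 ⊆ A ∧ x.2 ≤ i}, kappa G w c U x.2 x.1

/-- `g_i^𝒲(A) = Σ g_j(W)` over `(W,j) ∈ 𝒲` with `W ⊆ A` and `j ≤ i`. -/
noncomputable def gW (G : Multigraph V E) (w : E → ℕ) (U : Set E)
    (𝒲 : Set (Set V × ℤ)) (i : ℤ) (A : Set V) : ℕ :=
  ∑ᶠ x ∈ {x ∈ 𝒲 | x.1 ⊆ A ∧ x.2 ≤ i}, gfun G w U x.2 x.1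

/-- An *efficient* removal pattern: for every level `i ∈ {0,…,p}` and every `A ∈ 𝒜_i`,
either no member of `𝒲` on a level below `i` is contained in `A`, or all members of `𝒲`
on levels below `i` are contained in `A` and there is a numbering `Q_0, …, Q_{h-1}`
of the children `𝒞_i(A)` by nonincreasing auxiliary efficiency `ρ_{i-1} = g_{i-1}/κ_{i-1}`
(expressed by cross-multiplication, which encodes the convention `ρ = ∞` when `κ = 0`)
and an index `s ≤ h` such that exactly `Q_0, …, Q_{s-1}` belong to `𝒲` on level `i−1`
and every member of `𝒲` on a level `≤ i−2` is contained in `Q_s`. -/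
def IsEfficient (G : Multigraph V E) (w c : E → ℕ) (U : Set E) (p : ℕ)
    (𝒲 : Set (Set V × ℤ)) : Prop :=
  ∀ i : ℤ, 0 ≤ i → i ≤ (p : ℤ) → ∀ A ∈ G.parts (Ele w i \ U),
    (∀ x ∈ 𝒲, x.2 < i → ¬x.1 ⊆ A) ∨
    ((∀ x ∈ 𝒲, x.2 < i → x.1 ⊆ A) ∧
      ∃ (h : ℕ) (Q : Fin h → Set V) (s : ℕ),
        Function.Injective Q ∧
        (∀ D : Set V, (D ∈ G.parts (Ele w (i - 1) \ U) ∧ D ⊆ A) ↔ ∃ k, Q k = D) ∧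
        (∀ j k : Fin h, j ≤ k →
          gfun G w U (i - 1) (Q k) * kappa G w c U (i - 1) (Q j)
            ≤ gfun G w U (i - 1) (Q j) * kappa G w c U (i - 1) (Q k)) ∧
        s ≤ h ∧
        (∀ k : Fin h, (k : ℕ) < s → (Q k, i - 1) ∈ 𝒲) ∧
        (∀ k : Fin h, s ≤ (k : ℕ) → (Q k, i - 1) ∉ 𝒲) ∧
        (∀ x ∈ 𝒲, x.2 ≤ i - 2 → ∃ hs : s < h, x.1 ⊆ Q ⟨s, hs⟩))

/-! ### Auxiliary machinery -/

set_option linter.unusedSectionVars false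

section Aux

open scoped Classical

variable (G : Multigraph V E) (w c : E → ℕ) (U : Set E)

lemma setSum_eq_sum (S : Set E) :
    setSum c S = ∑ e : E, if e ∈ S then c e else 0 := by
  rw [setSum, finsum_mem_eq_finite_toFinset_sum _ (Set.toFinite S), ← Finset.sum_filter]
  congr 1
  ext e
  simp only [Set.Finite.mem_toFinset, Finset.mem_filter, Finset.mem_univ, true_and]

lemma setSum_le_setSum {S T : Set E} (h : S ⊆ T) : setSum c S ≤ setSum c T := by
  rw [setSum_eq_sum, setSum_eq_sum]
  refine Finset.sum_le_sum fun e _ => ?_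
  by_cases he : e ∈ S
  · simp [he, h he]
  · simp [he]

lemma setSum_union_le (S T : Set E) :
    setSum c (S ∪ T) ≤ setSum c S + setSum c T := by
  rw [setSum_eq_sum, setSum_eq_sum, setSum_eq_sum, ← Finset.sum_add_distrib]
  refine Finset.sum_le_sum fun e _ => ?_
  by_cases hs : e ∈ S <;> by_cases ht : e ∈ T <;> simp [hs, ht]

lemma setSum_insert_le (e : E) (S : Set E) :
    setSum c (insert e S) ≤ c e + setSum c S := by
  have := setSum_union_le c {e} S
  rw [Set.singleton_union] at this
  refine this.trans ?_
  gcongr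
  rw [setSum_eq_sum]
  rw [Finset.sum_eq_single e]
  · simp
  · intro b _ hb; simp [hb]
  · simp

lemma setSum_zero_of (S : Set E) (h : ∀ e ∈ S, c e = 0) : setSum c S = 0 := by
  rw [setSum_eq_sum]
  refine Finset.sum_eq_zero fun e _ => ?_
  by_cases he : e ∈ S
  · simp [he, h e he]
  · simp [he]

lemma le_setSum {S : Set E} {e : E} (he : e ∈ S) : c e ≤ setSum c S := by
  rw [setSum_eq_sum]
  have := Finset.single_le_sum (f := fun e => if e ∈ S then c e else 0)
    (fun i _ => Nat.zero_le _) (Finset.mem_univ e)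
  simpa [he] using this

/-! #### Components and parts -/

lemma Multigraph.mem_component_self (S : Set E) (v : V) : v ∈ G.component S v :=
  Relation.EqvGen.refl v

lemma Multigraph.component_eq_of_eqvGen {S : Set E} {u v : V}
    (h : Relation.EqvGen (G.rel S) u v) : G.component S u = G.component S v := by
  ext x
  exact ⟨fun hx => (h.symm _ _).trans _ _ _ hx, fun hx => h.trans _ _ _ hx⟩

lemma Multigraph.component_mem_parts (S : Set E) (v : V) :
    G.component S v ∈ G.parts S := ⟨v, rfl⟩

lemma Multigraph.parts_nonempty {S : Set E} {A : Set V} (hA : A ∈ G.parts S) :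
    A.Nonempty := by
  obtain ⟨v, rfl⟩ := hA
  exact ⟨v, G.mem_component_self S v⟩

lemma Multigraph.eq_component_of_mem {S : Set E} {A : Set V} {v : V}
    (hA : A ∈ G.parts S) (hv : v ∈ A) : A = G.component S v := by
  obtain ⟨u, rfl⟩ := hA
  exact G.component_eq_of_eqvGen hv

lemma Multigraph.eqvGen_of_mem_part {S : Set E} {A : Set V} {u v : V}
    (hA : A ∈ G.parts S) (hu : u ∈ A) (hv : v ∈ A) :
    Relation.EqvGen (G.rel S) u v := by
  rw [G.eq_component_of_mem hA hu] at hv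
  exact hv

lemma Multigraph.parts_eq_of_inter {S : Set E} {A B : Set V}
    (hA : A ∈ G.parts S) (hB : B ∈ G.parts S) (h : (A ∩ B).Nonempty) : A = B := by
  obtain ⟨v, hvA, hvB⟩ := h
  rw [G.eq_component_of_mem hA hvA, G.eq_component_of_mem hB hvB]

lemma Multigraph.parts_disjoint {S : Set E} {A B : Set V}
    (hA : A ∈ G.parts S) (hB : B ∈ G.parts S) (h : A ≠ B) : Disjoint A B := by
  rw [Set.disjoint_iff_inter_eq_empty]
  by_contra hne
  exact h (G.parts_eq_of_inter hA hB (Set.nonempty_iff_ne_empty.2 hne))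

lemma Multigraph.parts_eq_of_subset {S : Set E} {A B : Set V}
    (hA : A ∈ G.parts S) (hB : B ∈ G.parts S) (h : A ⊆ B) : A = B := by
  refine G.parts_eq_of_inter hA hB ?_
  obtain ⟨v, hv⟩ := G.parts_nonempty hA
  exact ⟨v, hv, h hv⟩

lemma Multigraph.rel_mono {S T : Set E} (h : S ⊆ T) {x y : V}
    (hr : G.rel S x y) : G.rel T x y := by
  obtain ⟨e, he, hor⟩ := hr
  exact ⟨e, h he, hor⟩

lemma Multigraph.eqvGen_mono {S T : Set E} (h : S ⊆ T) {x y : V}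
    (hr : Relation.EqvGen (G.rel S) x y) : Relation.EqvGen (G.rel T) x y :=
  Relation.EqvGen.mono (r := G.rel S) (p := G.rel T) (fun _ _ hxy => G.rel_mono h hxy) x y hr

lemma Multigraph.component_mono {S T : Set E} (h : S ⊆ T) (v : V) :
    G.component S v ⊆ G.component T v := fun _ hx => G.eqvGen_mono h hx

/-- Given `S ⊆ T`, each part of `S` is contained in a unique part of `T`. -/
lemma Multigraph.part_subset_part {S T : Set E} (hST : S ⊆ T) {A : Set V}
    (hA : A ∈ G.parts S) : ∃ B ∈ G.parts T, A ⊆ B := by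
  obtain ⟨v, rfl⟩ := hA
  exact ⟨G.component T v, G.component_mem_parts T v, G.component_mono hST v⟩

/-- If two edge sets generate the same equivalence, their parts coincide. -/
lemma Multigraph.parts_congr {S T : Set E}
    (h : ∀ x y : V, Relation.EqvGen (G.rel S) x y ↔ Relation.EqvGen (G.rel T) x y) :
    G.parts S = G.parts T := by
  have hc : ∀ v, G.component S v = G.component T v := by
    intro v; ext u; exact h v u
  unfold Multigraph.parts
  ext A
  simp only [Set.mem_setOf_eq]
  exact ⟨fun ⟨v, hv⟩ => ⟨v, hv.trans (hc v)⟩, fun ⟨v, hv⟩ => ⟨v, hv.trans (hc v).symm⟩⟩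

/-! #### `Ele` monotonicity -/

lemma Ele_mono {i j : ℤ} (h : i ≤ j) : Ele w i ⊆ Ele w j := by
  intro e he
  rcases he with h0 | ⟨ℓ, hℓ, hw⟩
  · exact Or.inl h0
  · exact Or.inr ⟨ℓ, hℓ.trans h, hw⟩

/-! #### Edge-counting formula for `kappa` -/

/-- Number of endpoints of `e` lying in `A` (0, 1, or 2). -/
noncomputable def endsIn (A : Set V) (e : E) : ℕ :=
  (if G.fst e ∈ A then 1 else 0) + (if G.snd e ∈ A then 1 else 0)

lemma kappa_eq_sum (i : ℤ) (A : Set V) :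
    kappa G w c U i A
      = ∑ e : E, if e ∈ U ∩ Ele w i then c e * endsIn G A e else 0 := by
  unfold kappa
  rw [setSum_eq_sum, setSum_eq_sum, Finset.mul_sum, ← Finset.sum_add_distrib]
  refine Finset.sum_congr rfl fun e _ => ?_
  by_cases hmU : e ∈ U <;> by_cases hmE : e ∈ Ele w i
  · by_cases h1 : G.fst e ∈ A <;> by_cases h2 : G.snd e ∈ A <;>
      simp [Multigraph.oneEnd, Multigraph.twoEnds, endsIn, hmU, hmE, h1, h2,
        Set.mem_setOf_eq, Set.mem_inter_iff, mul_add, mul_comm, mul_one, mul_zero] <;> ring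
  all_goals simp [Multigraph.oneEnd, Multigraph.twoEnds, hmU, hmE, Set.mem_setOf_eq,
    Set.mem_inter_iff]

lemma sum_indicator_le {ι : Type*} (F : Finset ι) (T : ι → Set V) (A : Set V)
    (hsub : ∀ i ∈ F, T i ⊆ A)
    (hdisj : ∀ i ∈ F, ∀ j ∈ F, i ≠ j → Disjoint (T i) (T j)) (v : V) :
    (∑ i ∈ F, if v ∈ T i then 1 else 0) ≤ (if v ∈ A then 1 else 0) := by
  by_cases hv : ∃ i ∈ F, v ∈ T i
  · obtain ⟨i0, hi0, hvi0⟩ := hv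
    rw [if_pos (hsub i0 hi0 hvi0)]
    have hcard : (F.filter (fun i => v ∈ T i)).card ≤ 1 := by
      refine Finset.card_le_one.2 fun a ha b hb => ?_
      rw [Finset.mem_filter] at ha hb
      by_contra hab
      exact Set.disjoint_left.1 (hdisj a ha.1 b hb.1 hab) ha.2 hb.2
    calc (∑ i ∈ F, if v ∈ T i then 1 else 0)
        = (F.filter (fun i => v ∈ T i)).card := by
          rw [Finset.card_filter]
      _ ≤ 1 := hcard
  · push_neg at hv
    have : (∑ i ∈ F, if v ∈ T i then 1 else 0) = 0 :=
      Finset.sum_eq_zero fun i hi => if_neg (hv i hi)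
    rw [this]
    exact Nat.zero_le _

lemma sum_endsIn_le {ι : Type*} (F : Finset ι) (T : ι → Set V) (A : Set V)
    (hsub : ∀ i ∈ F, T i ⊆ A)
    (hdisj : ∀ i ∈ F, ∀ j ∈ F, i ≠ j → Disjoint (T i) (T j)) (e : E) :
    (∑ i ∈ F, endsIn G (T i) e) ≤ endsIn G A e := by
  unfold endsIn
  rw [Finset.sum_add_distrib]
  exact Nat.add_le_add (sum_indicator_le F T A hsub hdisj _)
    (sum_indicator_le F T A hsub hdisj _)

/-- (L3) The κ-values of disjoint subsets of `A` on a lower level sum to at most `κ_i(A)`. -/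
lemma sum_kappa_le_kappa {ι : Type*} (F : Finset ι) (T : ι → Set V) (lev : ι → ℤ)
    (i : ℤ) (A : Set V)
    (hlev : ∀ k ∈ F, lev k ≤ i)
    (hsub : ∀ k ∈ F, T k ⊆ A)
    (hdisj : ∀ k ∈ F, ∀ j ∈ F, k ≠ j → Disjoint (T k) (T j)) :
    (∑ k ∈ F, kappa G w c U (lev k) (T k)) ≤ kappa G w c U i A := by
  simp only [kappa_eq_sum]
  rw [Finset.sum_comm]
  refine Finset.sum_le_sum fun e _ => ?_
  calc (∑ k ∈ F, if e ∈ U ∩ Ele w (lev k) then c e * endsIn G (T k) e else 0)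
      ≤ ∑ k ∈ F, (if e ∈ U ∩ Ele w i then c e * endsIn G (T k) e else 0) := by
        refine Finset.sum_le_sum fun k hk => ?_
        by_cases hm : e ∈ U ∩ Ele w (lev k)
        · rw [if_pos hm, if_pos ⟨hm.1, Ele_mono w (hlev k hk) hm.2⟩]
        · rw [if_neg hm]; exact Nat.zero_le _
    _ ≤ (if e ∈ U ∩ Ele w i then c e * endsIn G A e else 0) := by
        by_cases hm : e ∈ U ∩ Ele w i
        · simp only [if_pos hm, ← Finset.mul_sum]
          exact Nat.mul_le_mul_left _ (sum_endsIn_le G F T A hsub hdisj e)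
        · simp [hm]

/-! #### Counting parts inside a part -/

/-- If `D` is a part on level `j ≤ m` inside the part `A` of level `i ≥ m`, then the
unique part of level `m` containing `D` is inside `A`. -/
lemma cover_lemma {i m j : ℤ} (hji : j ≤ m) (hmi : m ≤ i) {A D : Set V}
    (hA : A ∈ G.parts (Ele w i \ U)) (hD : D ∈ G.parts (Ele w j \ U)) (hDA : D ⊆ A) :
    ∃ B ∈ G.parts (Ele w m \ U), D ⊆ B ∧ B ⊆ A := by
  obtain ⟨B, hB, hDB⟩ := G.part_subset_part
    (Set.diff_subset_diff_left (Ele_mono w hji)) hD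
  obtain ⟨A', hA', hBA'⟩ := G.part_subset_part
    (Set.diff_subset_diff_left (Ele_mono w hmi)) hB
  obtain ⟨v, hv⟩ := G.parts_nonempty hD
  have : A = A' := G.parts_eq_of_inter hA hA' ⟨v, hDA hv, hBA' (hDB hv)⟩
  exact ⟨B, hB, hDB, this ▸ hBA'⟩

lemma ncard_parts_split (S'' : Set E) {h : ℕ} (Q : Fin h → Set V) (A : Set V)
    (hQdisj : ∀ j k : Fin h, j ≠ k → Disjoint (Q j) (Q k))
    (hQA : ∀ k, Q k ⊆ A)
    (hcover : ∀ D ∈ G.parts S'', D ⊆ A → ∃ k, D ⊆ Q k) :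
    Nat.card {D : Set V | D ∈ G.parts S'' ∧ D ⊆ A}
      = ∑ k, Nat.card {D : Set V | D ∈ G.parts S'' ∧ D ⊆ Q k} := by
  have hfin : ∀ (B : Set V), ({D : Set V | D ∈ G.parts S'' ∧ D ⊆ B}).Finite :=
    fun B => Set.toFinite _
  have hcount : ∀ (B : Set V), Nat.card {D : Set V | D ∈ G.parts S'' ∧ D ⊆ B}
      = ((hfin B).toFinset).card := by
    intro B
    rw [Nat.card_coe_set_eq, Set.ncard_eq_toFinset_card _ (hfin B)]
  simp only [hcount]
  have hbi : (hfin A).toFinset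
      = Finset.univ.biUnion (fun k : Fin h => (hfin (Q k)).toFinset) := by
    ext D
    simp only [Set.Finite.mem_toFinset, Set.mem_setOf_eq, Finset.mem_biUnion,
      Finset.mem_univ, true_and]
    constructor
    · rintro ⟨hD, hDA⟩
      obtain ⟨k, hk⟩ := hcover D hD hDA
      exact ⟨k, hD, hk⟩
    · rintro ⟨k, hD, hk⟩
      exact ⟨hD, hk.trans (hQA k)⟩
  rw [hbi, Finset.card_biUnion]
  intro j _ k _ hjk
  rw [Function.onFun, Finset.disjoint_left]
  intro D hDj hDk
  simp only [Set.Finite.mem_toFinset, Set.mem_setOf_eq] at hDj hDk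
  obtain ⟨v, hv⟩ := G.parts_nonempty hDj.1
  exact Set.disjoint_left.1 (hQdisj j k hjk) (hDj.2 hv) (hDk.2 hv)

/-- The set of parts of level `i` inside a part `A` of level `i` is `{A}`. -/
lemma parts_inside_self {i : ℤ} {A : Set V} (hA : A ∈ G.parts (Ele w i \ U)) :
    {D : Set V | D ∈ G.parts (Ele w i \ U) ∧ D ⊆ A} = {A} := by
  ext D
  simp only [Set.mem_setOf_eq, Set.mem_singleton_iff]
  constructor
  · rintro ⟨hD, hDA⟩
    exact G.parts_eq_of_subset hD hA hDA
  · rintro rfl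
    exact ⟨hA, subset_rfl⟩

/-- (L2) Decomposition of `g_i(A)` over the children of `A`. -/
lemma gfun_decomp {i : ℤ} (hi0 : 0 ≤ i) {A : Set V} (hA : A ∈ G.parts (Ele w i \ U))
    {h : ℕ} {Q : Fin h → Set V} (hQinj : Function.Injective Q)
    (hQiff : ∀ D : Set V, (D ∈ G.parts (Ele w (i-1) \ U) ∧ D ⊆ A) ↔ ∃ k, Q k = D) :
    gfun G w U i A = (∑ k, gfun G w U (i - 1) (Q k)) + 2 ^ i.toNat := by
  have hQparts : ∀ k, Q k ∈ G.parts (Ele w (i-1) \ U) ∧ Q k ⊆ A :=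
    fun k => (hQiff (Q k)).2 ⟨k, rfl⟩
  have hQdisj : ∀ j k : Fin h, j ≠ k → Disjoint (Q j) (Q k) := fun j k hjk =>
    G.parts_disjoint (hQparts j).1 (hQparts k).1 (fun hEq => hjk (hQinj hEq))
  have hsplit : ∀ ℓ' : ℤ, ℓ' ≤ i - 1 →
      Nat.card {D : Set V | D ∈ G.parts (Ele w ℓ' \ U) ∧ D ⊆ A}
        = ∑ k, Nat.card {D : Set V | D ∈ G.parts (Ele w ℓ' \ U) ∧ D ⊆ Q k} := by
    intro ℓ' hℓ'
    refine ncard_parts_split G _ Q A hQdisj (fun k => (hQparts k).2) ?_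
    intro D hD hDA
    obtain ⟨B, hB, hDB, hBA⟩ := cover_lemma G w U hℓ' (by omega) hA hD hDA
    obtain ⟨k, hk⟩ := (hQiff B).1 ⟨hB, hBA⟩
    exact ⟨k, hk ▸ hDB⟩
  have htop : Nat.card {D : Set V | D ∈ G.parts (Ele w ((i.toNat : ℕ) : ℤ) \ U) ∧ D ⊆ A}
      = 1 := by
    rw [show ((i.toNat : ℕ) : ℤ) = i by omega, parts_inside_self G w U hA,
      Nat.card_coe_set_eq, Set.ncard_singleton]
  have hrange : (i + 1).toNat = i.toNat + 1 := by omega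
  have hrange' : ((i - 1) + 1).toNat = i.toNat := by omega
  unfold gfun
  rw [hrange, Finset.sum_range_succ, htop, mul_one]
  rw [hsplit (-1) (by omega)]
  have hsum2 : ∀ ℓ ∈ Finset.range i.toNat,
      2 ^ ℓ * Nat.card {D : Set V | D ∈ G.parts (Ele w (ℓ : ℤ) \ U) ∧ D ⊆ A}
        = ∑ k, 2 ^ ℓ * Nat.card {D : Set V | D ∈ G.parts (Ele w (ℓ : ℤ) \ U) ∧ D ⊆ Q k} := by
    intro ℓ hℓ
    rw [Finset.mem_range] at hℓ
    rw [hsplit (ℓ : ℤ) (by omega), Finset.mul_sum]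
  rw [Finset.sum_congr rfl hsum2, Finset.sum_comm]
  simp only [hrange']
  rw [Finset.sum_add_distrib]
  ring

/-! #### A cheap spanning subgraph: upper bound for `val` -/

/-- Two edge sets generating the same connectivity relation. -/
def SameEqv (G : Multigraph V E) (S T : Set E) : Prop :=
  ∀ x y : V, Relation.EqvGen (G.rel S) x y ↔ Relation.EqvGen (G.rel T) x y

lemma eqvGen_le_of_endpoints {S S' : Set E}
    (h : ∀ e ∈ S', Relation.EqvGen (G.rel S) (G.fst e) (G.snd e)) {x y : V}
    (hxy : Relation.EqvGen (G.rel S') x y) : Relation.EqvGen (G.rel S) x y := by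
  induction hxy with
  | rel a b hab =>
    obtain ⟨e, he, h1 | h2⟩ := hab
    · exact h1.1 ▸ h1.2 ▸ h e he
    · exact h2.1 ▸ h2.2 ▸ (h e he).symm
  | refl a => exact Relation.EqvGen.refl a
  | symm a b _ ih => exact ih.symm
  | trans a b d _ _ ih1 ih2 => exact ih1.trans _ _ _ ih2

lemma parts_ncard_insert_lt {S : Set E} {e : E}
    (hno : ¬ Relation.EqvGen (G.rel S) (G.fst e) (G.snd e)) :
    (G.parts (insert e S)).ncard < (G.parts S).ncard := by
  set A₁ := G.component S (G.fst e) with hA₁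
  set A₂ := G.component S (G.snd e) with hA₂
  have hA12 : A₁ ≠ A₂ := by
    intro hEq
    apply hno
    have hs : G.snd e ∈ A₂ := G.mem_component_self S (G.snd e)
    rw [← hEq] at hs
    exact hs
  classical
  set f : Set V → Set V := fun A =>
    if hn : A.Nonempty then G.component (insert e S) hn.some else ∅ with hf
  have key : ∀ A ∈ G.parts S, ∀ v ∈ A, f A = G.component (insert e S) v := by
    intro A hA v hv
    have hn : A.Nonempty := ⟨v, hv⟩
    rw [hf]
    simp only [dif_pos hn]
    exact G.component_eq_of_eqvGen
      (G.eqvGen_mono (Set.subset_insert e S)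
        (G.eqvGen_of_mem_part hA hn.some_mem hv))
  have hrelE : Relation.EqvGen (G.rel (insert e S)) (G.fst e) (G.snd e) :=
    Relation.EqvGen.rel _ _ ⟨e, Set.mem_insert e S, Or.inl ⟨rfl, rfl⟩⟩
  have hsurj : G.parts (insert e S) ⊆ f '' (G.parts S \ {A₂}) := by
    rintro B ⟨u, rfl⟩
    by_cases hu : G.component S u = A₂
    · refine ⟨A₁, ⟨G.component_mem_parts S _, hA12⟩, ?_⟩
      rw [key A₁ (G.component_mem_parts S _) (G.fst e) (G.mem_component_self S _)]
      refine (G.component_eq_of_eqvGen ?_)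
      refine hrelE.trans _ _ _ ?_
      have : u ∈ A₂ := hu ▸ G.mem_component_self S u
      exact G.eqvGen_mono (Set.subset_insert e S) this
    · refine ⟨G.component S u, ⟨G.component_mem_parts S _, hu⟩, ?_⟩
      rw [key _ (G.component_mem_parts S _) u (G.mem_component_self S _)]
  have h1 : (G.parts (insert e S)).ncard ≤ (G.parts S \ {A₂}).ncard :=
    le_trans (Set.ncard_le_ncard hsurj (Set.toFinite _))
      (Set.ncard_image_le (Set.toFinite _))
  have h2 : (G.parts S \ {A₂}).ncard + 1 = (G.parts S).ncard :=
    Set.ncard_diff_singleton_add_one (G.component_mem_parts S _) (Set.toFinite _)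
  omega

lemma exists_connector (M : ℕ) :
    ∀ n : ℕ, ∀ S : Set E, ∀ S' : Set E, S ⊆ S' → (∀ e ∈ S', w e ≤ M) →
      (G.parts S).ncard ≤ n →
      ∃ F : Set E, F ⊆ S' ∧ SameEqv G (S ∪ F) S' ∧
        setSum w F + M * (G.parts S').ncard ≤ M * (G.parts S).ncard := by
  intro n
  induction n using Nat.strong_induction_on with
  | _ n ih =>
    intro S S' hSS' hwt hn
    by_cases hEq : SameEqv G S S'
    · refine ⟨∅, Set.empty_subset _, by rwa [Set.union_empty], ?_⟩
      rw [G.parts_congr hEq, setSum_zero_of w ∅ (fun e he => absurd he (Set.notMem_empty e))]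
      omega
    · have hex : ∃ e ∈ S', ¬ Relation.EqvGen (G.rel S) (G.fst e) (G.snd e) := by
        by_contra hcon
        push_neg at hcon
        refine hEq fun x y => ⟨fun hxy => G.eqvGen_mono hSS' hxy,
          fun hxy => eqvGen_le_of_endpoints G hcon hxy⟩
      obtain ⟨e, heS', hno⟩ := hex
      have hlt := parts_ncard_insert_lt G hno
      obtain ⟨F', hF'sub, hF'eqv, hF'bound⟩ :=
        ih (G.parts (insert e S)).ncard (by omega) (insert e S) S'
          (Set.insert_subset heS' hSS') hwt le_rfl
      refine ⟨insert e F', Set.insert_subset heS' hF'sub, ?_, ?_⟩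
      · rw [Set.union_insert, ← Set.insert_union]
        exact hF'eqv
      · have h1 : setSum w (insert e F') ≤ w e + setSum w F' := setSum_insert_le w e F'
        have h2 : w e ≤ M := hwt e heS'
        have : M * (G.parts (insert e S)).ncard + M ≤ M * (G.parts S).ncard := by
          have := Nat.mul_le_mul_left M hlt
          calc M * (G.parts (insert e S)).ncard + M
              = M * ((G.parts (insert e S)).ncard + 1) := by ring
            _ ≤ M * (G.parts S).ncard := Nat.mul_le_mul_left M (by omega)
        omega

lemma spanning_chain (p : ℕ) :
    ∀ i : ℕ, i ≤ p → ∃ T : Set E, T ⊆ Ele w (i : ℤ) \ U ∧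
      SameEqv G T (Ele w (i : ℤ) \ U) ∧
      setSum w T + 2 ^ i * (G.parts (Ele w (i : ℤ) \ U)).ncard
        ≤ (G.parts (Ele w (-1) \ U)).ncard
          + ∑ ℓ ∈ Finset.range i, 2 ^ ℓ * (G.parts (Ele w (ℓ : ℤ) \ U)).ncard := by
  intro i
  induction i with
  | zero =>
    intro _
    obtain ⟨F, hFsub, hFeqv, hFbound⟩ :=
      exists_connector G w 1 (G.parts (Ele w (-1) \ U)).ncard
        (Ele w (-1) \ U) (Ele w ((0:ℕ) : ℤ) \ U)
        (Set.diff_subset_diff_left (Ele_mono w (by norm_num)))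
        (by
          rintro e ⟨he, -⟩
          rcases he with h0 | ⟨ℓ, hℓ, hw⟩
          · omega
          · have : ℓ = 0 := by omega
            subst this; simp at hw; omega)
        le_rfl
    refine ⟨(Ele w (-1) \ U) ∪ F, Set.union_subset
      (Set.diff_subset_diff_left (Ele_mono w (by norm_num))) hFsub, hFeqv, ?_⟩
    have hzero : setSum w (Ele w (-1) \ U) = 0 := by
      refine setSum_zero_of w _ ?_
      rintro e ⟨he, -⟩
      rcases he with h0 | ⟨ℓ, hℓ, _⟩
      · exact h0
      · omega
    have h1 : setSum w ((Ele w (-1) \ U) ∪ F) ≤ setSum w F := by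
      have := setSum_union_le w (Ele w (-1) \ U) F
      omega
    simp only [Finset.range_zero, Finset.sum_empty, pow_zero]
    omega
  | succ i ihi =>
    intro hip
    obtain ⟨T, hTsub, hTeqv, hTbound⟩ := ihi (by omega)
    have hcastle : ((i : ℕ) : ℤ) ≤ (((i+1 : ℕ)) : ℤ) := by push_cast; omega
    obtain ⟨F, hFsub, hFeqv, hFbound⟩ :=
      exists_connector G w (2 ^ (i+1)) (G.parts T).ncard T (Ele w ((i+1 : ℕ) : ℤ) \ U)
        (hTsub.trans (Set.diff_subset_diff_left (Ele_mono w hcastle)))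
        (by
          rintro e ⟨he, -⟩
          rcases he with h0 | ⟨ℓ, hℓ, hw⟩
          · rw [h0]; exact Nat.zero_le _
          · have hℓ' : ℓ ≤ i + 1 := by omega
            rw [hw]
            exact Nat.pow_le_pow_right (by norm_num) hℓ')
        le_rfl
    have hparts : G.parts T = G.parts (Ele w (i : ℤ) \ U) := G.parts_congr hTeqv
    refine ⟨T ∪ F, Set.union_subset
      (hTsub.trans (Set.diff_subset_diff_left (Ele_mono w hcastle))) hFsub, hFeqv, ?_⟩
    have h1 : setSum w (T ∪ F) ≤ setSum w T + setSum w F := setSum_union_le w T F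
    rw [hparts] at hFbound
    rw [Finset.sum_range_succ]
    have hbridge : 2 ^ (i+1) * (G.parts (Ele w (i : ℤ) \ U)).ncard
        = 2 ^ i * (G.parts (Ele w (i : ℤ) \ U)).ncard
          + 2 ^ i * (G.parts (Ele w (i : ℤ) \ U)).ncard := by
      rw [show (2:ℕ) ^ (i+1) = 2 ^ i + 2 ^ i by ring]
      ring
    calc setSum w (T ∪ F) + 2 ^ (i+1) * (G.parts (Ele w ((i+1:ℕ) : ℤ) \ U)).ncard
        ≤ setSum w T + (setSum w F + 2 ^ (i+1) * (G.parts (Ele w ((i+1:ℕ) : ℤ) \ U)).ncard) := by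
          omega
      _ ≤ setSum w T + 2 ^ (i+1) * (G.parts (Ele w (i : ℤ) \ U)).ncard := by omega
      _ = setSum w T + 2 ^ i * (G.parts (Ele w (i : ℤ) \ U)).ncard
            + 2 ^ i * (G.parts (Ele w (i : ℤ) \ U)).ncard := by rw [hbridge]; ring
      _ ≤ _ := by omega

lemma val_le (p : ℕ) (hEp : G.Connects {e | w e = 2 ^ p}) (hU : U ⊆ Ele w ((p : ℤ) - 1))
    (hV : Nonempty V) :
    G.val w U + 2 ^ p + 2 ^ p ≤ gfun G w U (p : ℤ) Set.univ := by
  obtain ⟨T, hTsub, hTeqv, hTbound⟩ := spanning_chain G w U p p le_rfl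
  have hsub2p : {e | w e = 2 ^ p} ⊆ Ele w (p : ℤ) \ U := by
    intro e he
    refine ⟨Or.inr ⟨p, le_rfl, he⟩, fun heU => ?_⟩
    rcases hU heU with h0 | ⟨ℓ, hℓ, hw⟩
    · rw [Set.mem_setOf_eq] at he; rw [he] at h0
      simp at h0
    · rw [Set.mem_setOf_eq] at he
      rw [he] at hw
      have := Nat.pow_right_injective (le_refl 2) hw
      omega
  have hTU : T ⊆ Uᶜ := fun e he => (hTsub he).2
  have hconn : G.Connects T := fun x y =>
    (hTeqv x y).2 (G.eqvGen_mono hsub2p (hEp x y))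
  have hval : G.val w U ≤ setSum w T := Nat.sInf_le ⟨T, hTU, hconn, rfl⟩
  have hgfun : gfun G w U (p : ℤ) Set.univ
      = (G.parts (Ele w (-1) \ U)).ncard
        + ∑ ℓ ∈ Finset.range (p + 1), 2 ^ ℓ * (G.parts (Ele w (ℓ : ℤ) \ U)).ncard := by
    unfold gfun
    have h1 : ((p : ℤ) + 1).toNat = p + 1 := by omega
    rw [h1]
    congr 1
    · rw [Nat.card_coe_set_eq]
      congr 1
      ext D; simp [Set.subset_univ]
    · refine Finset.sum_congr rfl fun ℓ _ => ?_
      congr 1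
      rw [Nat.card_coe_set_eq]
      congr 1
      ext D; simp [Set.subset_univ]
  have hnp : 1 ≤ (G.parts (Ele w (p : ℤ) \ U)).ncard := by
    obtain ⟨v⟩ := hV
    have hne : (G.parts (Ele w (p : ℤ) \ U)).Nonempty := ⟨_, G.component_mem_parts _ v⟩
    have hpos : 0 < (G.parts (Ele w (p : ℤ) \ U)).ncard :=
      (Set.ncard_pos (Set.toFinite _)).mpr hne
    omega
  rw [hgfun, Finset.sum_range_succ]
  have h2p : 2 ^ p ≤ 2 ^ p * (G.parts (Ele w (p : ℤ) \ U)).ncard := by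
    calc (2:ℕ) ^ p = 2 ^ p * 1 := (mul_one _).symm
      _ ≤ _ := Nat.mul_le_mul_left _ hnp
  omega

/-! #### The key algebraic inequality -/

lemma key_algebra {h s : ℕ} (hs : s < h) (gk κk : Fin h → ℕ)
    (sorted : ∀ j k : Fin h, j ≤ k → gk k * κk j ≤ gk j * κk k)
    (gWs κWs κA bi bi' : ℕ)
    (hb : bi' + bi' ≤ bi)
    (hIH : κWs * gk ⟨s, hs⟩ ≤ gWs * κk ⟨s, hs⟩ + bi' * κk ⟨s, hs⟩ + bi' * κWs)
    (hkW : κWs ≤ κk ⟨s, hs⟩)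
    (hkA : (∑ k, κk k) ≤ κA) :
    ((∑ k ∈ Finset.univ.filter (fun k : Fin h => (k : ℕ) < s), κk k) + κWs)
        * ((∑ k, gk k) + bi)
      ≤ ((∑ k ∈ Finset.univ.filter (fun k : Fin h => (k : ℕ) < s), gk k) + gWs) * κA
          + bi * κA
          + bi * ((∑ k ∈ Finset.univ.filter (fun k : Fin h => (k : ℕ) < s), κk k) + κWs) := by
  classical
  set qs : Fin h := ⟨s, hs⟩ with hqs
  set pre : Finset (Fin h) := Finset.univ.filter (fun k : Fin h => (k : ℕ) < s) with hpre
  set suf : Finset (Fin h) := Finset.univ.filter (fun k : Fin h => s < (k : ℕ)) with hsuf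
  have hdec : ∀ f : Fin h → ℕ,
      (∑ k, f k) = (∑ k ∈ pre, f k) + f qs + (∑ k ∈ suf, f k) := by
    intro f
    rw [← Finset.sum_filter_add_sum_filter_not Finset.univ (fun k : Fin h => (k : ℕ) < s) f]
    have hqv : (qs : ℕ) = s := rfl
    have hins : Finset.univ.filter (fun k : Fin h => ¬ (k : ℕ) < s) = insert qs suf := by
      ext k
      simp only [Finset.mem_filter, Finset.mem_univ, true_and, Finset.mem_insert, hsuf]
      constructor
      · intro hk
        rcases Nat.lt_or_ge s (k : ℕ) with h1 | h1
        · exact Or.inr h1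
        · exact Or.inl (Fin.ext (by omega))
      · rintro (rfl | hk)
        · omega
        · omega
    have hnotmem : qs ∉ suf := by
      simp only [hsuf, Finset.mem_filter, Finset.mem_univ, true_and]
      omega
    rw [hins, Finset.sum_insert hnotmem]
    ring
  set Pg := ∑ k ∈ pre, gk k with hPg
  set Pk := ∑ k ∈ pre, κk k with hPk
  set Sg := ∑ k ∈ suf, gk k with hSg
  set Sk := ∑ k ∈ suf, κk k with hSk
  set gs := gk qs with hgs
  set κs := κk qs with hκs
  have hGsum : (∑ k, gk k) = Pg + gs + Sg := hdec gk
  have hKsum : (∑ k, κk k) = Pk + κs + Sk := hdec κk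
  have hqv : (qs : ℕ) = s := rfl
  have hpre_le : ∀ k ∈ pre, k ≤ qs := by
    intro k hk
    simp only [hpre, Finset.mem_filter, Finset.mem_univ, true_and] at hk
    exact Fin.le_def.mpr (by omega)
  have hsuf_ge : ∀ k ∈ suf, qs ≤ k := by
    intro k hk
    simp only [hsuf, Finset.mem_filter, Finset.mem_univ, true_and] at hk
    exact Fin.le_def.mpr (by omega)
  have ha : Pk * gs ≤ Pg * κs := by
    rw [hPk, hPg, Finset.sum_mul, Finset.sum_mul]
    refine Finset.sum_le_sum fun k hk => ?_
    rw [mul_comm (κk k) gs, hgs, hκs]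
    exact sorted k qs (hpre_le k hk)
  have hbineq : Pk * Sg ≤ Pg * Sk := by
    rw [hPk, hPg, hSg, hSk, Finset.sum_mul_sum, Finset.sum_mul_sum]
    refine Finset.sum_le_sum fun k hk => Finset.sum_le_sum fun k' hk' => ?_
    rw [mul_comm (κk k) (gk k')]
    exact sorted k k' ((hpre_le k hk).trans (hsuf_ge k' hk'))
  have hcineq : κs * Sg ≤ gs * Sk := by
    rw [hSg, hSk, Finset.mul_sum, Finset.mul_sum]
    refine Finset.sum_le_sum fun k' hk' => ?_
    rw [mul_comm κs (gk k'), hgs, hκs]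
    exact sorted qs k' (hsuf_ge k' hk')
  -- the rearrangement step
  have hrearr : κWs * (Pg * κs) + κs * (Pk * gs) ≤ κWs * (Pk * gs) + κs * (Pg * κs) :=
    mul_add_mul_le_mul_add_mul hkW ha
  -- MAIN inequality
  have hMAIN : κs * (Pk * (Pg + gs + Sg)) + κWs * (κs * (Pg + gs + Sg))
      ≤ κs * (Pg * (Pk + κs + Sk)) + κWs * (gs * (Pk + κs + Sk)) := by
    have t3 : κs * (Pk * Sg) ≤ κs * (Pg * Sk) := Nat.mul_le_mul_left _ hbineq
    have t5 : κWs * (κs * Sg) ≤ κWs * (gs * Sk) := Nat.mul_le_mul_left _ hcineq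
    calc κs * (Pk * (Pg + gs + Sg)) + κWs * (κs * (Pg + gs + Sg))
        = κs * (Pk * Pg) + (κWs * (Pg * κs) + κs * (Pk * gs))
          + (κs * (Pk * Sg) + (κWs * (κs * gs) + κWs * (κs * Sg))) := by ring
      _ ≤ κs * (Pg * Pk) + (κWs * (Pk * gs) + κs * (Pg * κs))
          + (κs * (Pg * Sk) + (κWs * (gs * κs) + κWs * (gs * Sk))) := by
          exact Nat.add_le_add (Nat.add_le_add (le_of_eq (by ring)) hrearr)
            (Nat.add_le_add t3 (Nat.add_le_add (le_of_eq (by ring)) t5))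
      _ = κs * (Pg * (Pk + κs + Sk)) + κWs * (gs * (Pk + κs + Sk)) := by ring
  -- step 2: the K-version
  have hKstep : (Pk + κWs) * (Pg + gs + Sg)
      ≤ (Pg + gWs) * (Pk + κs + Sk) + bi * (Pk + κs + Sk) := by
    rcases Nat.eq_zero_or_pos κs with hκ0 | hκpos
    · have hκW0 : κWs = 0 := by omega
      have hPkgs : Pk * gs = 0 := by
        have h' := ha
        rw [hκ0, mul_zero] at h'
        omega
      calc (Pk + κWs) * (Pg + gs + Sg) = Pk * Pg + Pk * gs + Pk * Sg := by
            rw [hκW0]; ring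
        _ = Pg * Pk + Pk * Sg := by rw [hPkgs]; ring
        _ ≤ Pg * Pk + Pg * Sk := Nat.add_le_add_left hbineq _
        _ ≤ Pg * Pk + Pg * κs + Pg * Sk := by omega
        _ = Pg * (Pk + κs + Sk) := by ring
        _ ≤ (Pg + gWs) * (Pk + κs + Sk) := Nat.mul_le_mul_right _ (Nat.le_add_right _ _)
        _ ≤ (Pg + gWs) * (Pk + κs + Sk) + bi * (Pk + κs + Sk) := Nat.le_add_right _ _
    · refine Nat.le_of_mul_le_mul_left ?_ hκpos
      have hIHK : κWs * gs * (Pk + κs + Sk)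
          ≤ (gWs * κs + bi' * κs + bi' * κWs) * (Pk + κs + Sk) :=
        Nat.mul_le_mul_right _ hIH
      have hkWK : bi' * κWs * (Pk + κs + Sk) ≤ bi' * κs * (Pk + κs + Sk) :=
        Nat.mul_le_mul_right _ (Nat.mul_le_mul_left _ hkW)
      have hbK : (bi' + bi') * (κs * (Pk + κs + Sk)) ≤ bi * (κs * (Pk + κs + Sk)) :=
        Nat.mul_le_mul_right _ hb
      calc κs * ((Pk + κWs) * (Pg + gs + Sg))
          = κs * (Pk * (Pg + gs + Sg)) + κWs * (κs * (Pg + gs + Sg)) := by ring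
        _ ≤ κs * (Pg * (Pk + κs + Sk)) + κWs * (gs * (Pk + κs + Sk)) := hMAIN
        _ = κs * (Pg * (Pk + κs + Sk)) + κWs * gs * (Pk + κs + Sk) := by ring
        _ ≤ κs * (Pg * (Pk + κs + Sk))
              + (gWs * κs + bi' * κs + bi' * κWs) * (Pk + κs + Sk) :=
            Nat.add_le_add_left hIHK _
        _ = κs * (Pg * (Pk + κs + Sk)) + gWs * κs * (Pk + κs + Sk)
              + bi' * κs * (Pk + κs + Sk) + bi' * κWs * (Pk + κs + Sk) := by ring
        _ ≤ κs * (Pg * (Pk + κs + Sk)) + gWs * κs * (Pk + κs + Sk)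
              + bi' * κs * (Pk + κs + Sk) + bi' * κs * (Pk + κs + Sk) :=
            Nat.add_le_add_left hkWK _
        _ = κs * (Pg * (Pk + κs + Sk)) + κs * (gWs * (Pk + κs + Sk))
              + (bi' + bi') * (κs * (Pk + κs + Sk)) := by ring
        _ ≤ κs * (Pg * (Pk + κs + Sk)) + κs * (gWs * (Pk + κs + Sk))
              + bi * (κs * (Pk + κs + Sk)) := Nat.add_le_add_left hbK _
        _ = κs * ((Pg + gWs) * (Pk + κs + Sk) + bi * (Pk + κs + Sk)) := by ring
  -- conclude
  have h1 : (Pg + gWs) * (Pk + κs + Sk) ≤ (Pg + gWs) * κA :=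
    Nat.mul_le_mul_left _ (hKsum ▸ hkA)
  have h2 : bi * (Pk + κs + Sk) ≤ bi * κA := Nat.mul_le_mul_left _ (hKsum ▸ hkA)
  rw [hGsum]
  calc (Pk + κWs) * ((Pg + gs + Sg) + bi)
      = (Pk + κWs) * (Pg + gs + Sg) + bi * (Pk + κWs) := by ring
    _ ≤ ((Pg + gWs) * (Pk + κs + Sk) + bi * (Pk + κs + Sk)) + bi * (Pk + κWs) :=
        Nat.add_le_add_right hKstep _
    _ ≤ ((Pg + gWs) * κA + bi * κA) + bi * (Pk + κWs) :=
        Nat.add_le_add_right (Nat.add_le_add h1 h2) _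
    _ = (Pg + gWs) * κA + bi * κA + bi * (Pk + κWs) := by ring

lemma finsum_mem_eq_sum_of_mem_iff {α β : Type*} [AddCommMonoid β] (f : α → β) {s : Set α}
    {F : Finset α} (h : ∀ x, x ∈ F ↔ x ∈ s) : ∑ᶠ x ∈ s, f x = ∑ x ∈ F, f x := by
  have hs : s = ↑F := by ext x; simp [← h x]
  rw [hs, finsum_mem_coe_finset]

/-! #### The invariant -/

/-- `β i = 2^i` for `i ≥ 0`, and `0` for `i < 0`. -/
def beta (i : ℤ) : ℕ := if 0 ≤ i then 2 ^ i.toNat else 0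

lemma beta_db {i : ℤ} (hi : 0 ≤ i) : beta (i - 1) + beta (i - 1) ≤ beta i := by
  unfold beta
  rcases eq_or_lt_of_le hi with h0 | h1
  · rw [if_pos hi, if_neg (by omega)]
    positivity
  · rw [if_pos hi, if_pos (by omega)]
    have h2 : (i - 1).toNat + 1 = i.toNat := by omega
    have h3 : 2 ^ (i-1).toNat + 2 ^ (i-1).toNat = 2 ^ i.toNat := by
      rw [← h2]; ring
    omega

lemma beta_of_nonneg {i : ℤ} (hi : 0 ≤ i) : beta i = 2 ^ i.toNat := if_pos hi

/-- (L4) `κ_i^𝒲(A) ≤ κ_i(A)`. -/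
lemma kappaW_le_kappa {p : ℕ} {𝒲 : Set (Set V × ℤ)}
    (hRP : IsRemovalPattern G w U p 𝒲) (i : ℤ) (A : Set V)
    (hsubA : ∀ x ∈ 𝒲, x.2 ≤ i → x.1 ⊆ A → x.1 ⊆ A) :
    kappaW G w c U 𝒲 i A ≤ kappa G w c U i A := by
  classical
  have hfin : ({x ∈ 𝒲 | x.1 ⊆ A ∧ x.2 ≤ i}).Finite :=
    hRP.finite.subset (Set.sep_subset _ _)
  rw [kappaW, finsum_mem_eq_sum_of_mem_iff _ (fun x => hfin.mem_toFinset)]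
  refine sum_kappa_le_kappa G w c U hfin.toFinset (fun x => x.1) (fun x => x.2) i A
    ?_ ?_ ?_
  · intro x hx
    rw [Set.Finite.mem_toFinset] at hx
    exact hx.2.2
  · intro x hx
    rw [Set.Finite.mem_toFinset] at hx
    exact hx.2.1
  · intro x hx y hy hxy
    rw [Set.Finite.mem_toFinset] at hx hy
    exact hRP.disjoint x hx.1 y hy.1 hxy

/-- The main inductive invariant:
`κ_i^𝒲(A) · g_i(A) ≤ g_i^𝒲(A) · κ_i(A) + β_i · κ_i(A) + β_i · κ_i^𝒲(A)`. -/
lemma claim_invariant (p : ℕ) (𝒲 : Set (Set V × ℤ))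
    (hRP : IsRemovalPattern G w U p 𝒲) (hEff : IsEfficient G w c U p 𝒲) :
    ∀ n : ℕ, ∀ i : ℤ, i + 1 = (n : ℤ) → i ≤ (p : ℤ) →
      ∀ A ∈ G.parts (Ele w i \ U),
        kappaW G w c U 𝒲 i A * gfun G w U i A
          ≤ gW G w U 𝒲 i A * kappa G w c U i A
            + beta i * kappa G w c U i A + beta i * kappaW G w c U 𝒲 i A := by
  classical
  -- two helper facts, used in several cases
  have hmemNE : ∀ x ∈ 𝒲, (x.1 : Set V).Nonempty := fun x hx =>
    G.parts_nonempty (hRP.parts x hx)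
  have hsingle : ∀ (i : ℤ) (A : Set V),
      {x ∈ 𝒲 | x.1 ⊆ A ∧ x.2 ≤ i} = {((A, i) : Set V × ℤ)} →
      kappaW G w c U 𝒲 i A * gfun G w U i A
        ≤ gW G w U 𝒲 i A * kappa G w c U i A
          + beta i * kappa G w c U i A + beta i * kappaW G w c U 𝒲 i A := by
    intro i A hM
    have h1 : kappaW G w c U 𝒲 i A = kappa G w c U i A := by
      rw [kappaW, hM, finsum_mem_singleton]
    have h2 : gW G w U 𝒲 i A = gfun G w U i A := by
      rw [gW, hM, finsum_mem_singleton]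
    rw [h1, h2, mul_comm]
    exact Nat.le_add_right _ _ |>.trans (Nat.le_add_right _ _)
  have hempty : ∀ (i : ℤ) (A : Set V),
      {x ∈ 𝒲 | x.1 ⊆ A ∧ x.2 ≤ i} = (∅ : Set (Set V × ℤ)) →
      kappaW G w c U 𝒲 i A * gfun G w U i A
        ≤ gW G w U 𝒲 i A * kappa G w c U i A
          + beta i * kappa G w c U i A + beta i * kappaW G w c U 𝒲 i A := by
    intro i A hM
    have h1 : kappaW G w c U 𝒲 i A = 0 := by
      rw [kappaW, hM, finsum_mem_empty]
    rw [h1, zero_mul, mul_zero, add_zero]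
    exact Nat.zero_le _
  intro n
  induction n with
  | zero =>
    intro i hi _ A hA
    have hi1 : i = -1 := by omega
    subst hi1
    by_cases hAW : ((A, (-1 : ℤ)) : Set V × ℤ) ∈ 𝒲
    · refine hsingle _ _ ?_
      ext x
      simp only [Set.mem_setOf_eq, Set.mem_singleton_iff]
      constructor
      · rintro ⟨hx𝒲, hxA, hxlev⟩
        have hge := (hRP.levels x hx𝒲).1
        have hlev : x.2 = -1 := by omega
        have hx1 : x.1 ∈ G.parts (Ele w (-1) \ U) := by
          have := hRP.parts x hx𝒲
          rwa [hlev] at this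
        exact Prod.ext_iff.mpr ⟨G.parts_eq_of_subset hx1 hA hxA, hlev⟩
      · rintro rfl
        exact ⟨hAW, subset_rfl, le_rfl⟩
    · refine hempty _ _ ?_
      ext x
      simp only [Set.mem_setOf_eq, Set.mem_empty_iff_false, iff_false]
      rintro ⟨hx𝒲, hxA, hxlev⟩
      have hge := (hRP.levels x hx𝒲).1
      have hlev : x.2 = -1 := by omega
      have hx1 : x.1 ∈ G.parts (Ele w (-1) \ U) := by
        have := hRP.parts x hx𝒲
        rwa [hlev] at this
      exact hAW (by
        have hxeq : x = ((A, (-1 : ℤ)) : Set V × ℤ) :=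
          Prod.ext_iff.mpr ⟨G.parts_eq_of_subset hx1 hA hxA, hlev⟩
        rwa [hxeq] at hx𝒲)
  | succ m ihm =>
    intro i hi hip A hA
    have hi0 : 0 ≤ i := by omega
    by_cases hAW : ((A, i) : Set V × ℤ) ∈ 𝒲
    · refine hsingle _ _ ?_
      ext x
      simp only [Set.mem_setOf_eq, Set.mem_singleton_iff]
      constructor
      · rintro ⟨hx𝒲, hxA, hxlev⟩
        by_contra hne
        have hdisj := hRP.disjoint x hx𝒲 (A, i) hAW hne
        obtain ⟨v, hv⟩ := hmemNE x hx𝒲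
        exact Set.disjoint_left.1 hdisj hv (hxA hv)
      · rintro rfl
        exact ⟨hAW, subset_rfl, le_rfl⟩
    · rcases hEff i hi0 hip A hA with hcase1 |
        ⟨hall, h, Q, s, hQinj, hQiff, hsorted, hsh, hpreW, hsufW, hdeep⟩
      · -- no members strictly below level i inside A
        refine hempty _ _ ?_
        ext x
        simp only [Set.mem_setOf_eq, Set.mem_empty_iff_false, iff_false]
        rintro ⟨hx𝒲, hxA, hxlev⟩
        rcases lt_or_eq_of_le hxlev with hlt | heq
        · exact hcase1 x hx𝒲 hlt hxA
        · have hx1 : x.1 ∈ G.parts (Ele w i \ U) := by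
            have := hRP.parts x hx𝒲
            rwa [heq] at this
          exact hAW (by
            have hxeq : x = ((A, i) : Set V × ℤ) :=
              Prod.ext_iff.mpr ⟨G.parts_eq_of_subset hx1 hA hxA, heq⟩
            rwa [hxeq] at hx𝒲)
      · -- the structured case
        have hQparts : ∀ k, Q k ∈ G.parts (Ele w (i-1) \ U) ∧ Q k ⊆ A :=
          fun k => (hQiff (Q k)).2 ⟨k, rfl⟩
        have hQdisj : ∀ j k : Fin h, j ≠ k → Disjoint (Q j) (Q k) := fun j k hjk =>
          G.parts_disjoint (hQparts j).1 (hQparts k).1 (fun hEq => hjk (hQinj hEq))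
        have hKA : (∑ k, kappa G w c U (i-1) (Q k)) ≤ kappa G w c U i A :=
          sum_kappa_le_kappa G w c U Finset.univ Q (fun _ => i - 1) i A
            (fun _ _ => by show i - 1 ≤ i; omega) (fun k _ => (hQparts k).2)
            (fun k _ j _ hkj => hQdisj k j hkj)
        have hgdec := gfun_decomp G w U hi0 hA hQinj hQiff
        -- a general fact: members of level `= i` inside `A` are impossible here,
        -- and those of level `= i - 1` are exactly the prefix
        have hmem_cases : ∀ x, x ∈ 𝒲 → x.1 ⊆ A → x.2 ≤ i →
            (∃ k : Fin h, (k : ℕ) < s ∧ x = (Q k, i - 1)) ∨ x.2 ≤ i - 2 := by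
          intro x hx𝒲 hxA hxlev
          rcases lt_or_eq_of_le hxlev with hlt | heq
          · rcases lt_or_eq_of_le (by omega : x.2 ≤ i - 1) with hlt2 | heq2
            · exact Or.inr (by omega)
            · have hx1 : x.1 ∈ G.parts (Ele w (i-1) \ U) := by
                have := hRP.parts x hx𝒲
                rwa [heq2] at this
              obtain ⟨k, hk⟩ := (hQiff x.1).1 ⟨hx1, hxA⟩
              have hxpair : x = (Q k, i - 1) := Prod.ext_iff.mpr ⟨hk.symm, heq2⟩
              rcases Nat.lt_or_ge (k : ℕ) s with hks | hks
              · exact Or.inl ⟨k, hks, hxpair⟩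
              · exact absurd (hxpair ▸ hx𝒲) (hsufW k hks)
          · have hx1 : x.1 ∈ G.parts (Ele w i \ U) := by
              have := hRP.parts x hx𝒲
              rwa [heq] at this
            exact absurd (by
              have hxeq : x = ((A, i) : Set V × ℤ) :=
                Prod.ext_iff.mpr ⟨G.parts_eq_of_subset hx1 hA hxA, heq⟩
              rwa [hxeq] at hx𝒲 : ((A, i) : Set V × ℤ) ∈ 𝒲) hAW
        by_cases hs : s < h
        · -- members decompose as prefix plus the deep part inside `Q ⟨s, hs⟩`
          set qs : Fin h := ⟨s, hs⟩ with hqs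
          have hMeq : {x ∈ 𝒲 | x.1 ⊆ A ∧ x.2 ≤ i}
              = ((fun k : Fin h => ((Q k, i - 1) : Set V × ℤ)) '' {k : Fin h | (k : ℕ) < s})
                ∪ {x ∈ 𝒲 | x.1 ⊆ Q qs ∧ x.2 ≤ i - 1} := by
            ext x
            simp only [Set.mem_setOf_eq, Set.mem_union, Set.mem_image]
            constructor
            · rintro ⟨hx𝒲, hxA, hxlev⟩
              rcases hmem_cases x hx𝒲 hxA hxlev with ⟨k, hks, hxpair⟩ | hdeeplev
              · exact Or.inl ⟨k, hks, hxpair.symm⟩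
              · obtain ⟨hs', hsub⟩ := hdeep x hx𝒲 hdeeplev
                exact Or.inr ⟨hx𝒲, hsub, by omega⟩
            · rintro (⟨k, hks, rfl⟩ | ⟨hx𝒲, hxsub, hxlev⟩)
              · exact ⟨hpreW k hks, (hQparts k).2, by omega⟩
              · exact ⟨hx𝒲, hxsub.trans (hQparts qs).2, by omega⟩
          have hLfin : (((fun k : Fin h => ((Q k, i - 1) : Set V × ℤ)) ''
              {k : Fin h | (k : ℕ) < s})).Finite := Set.toFinite _
          have hRfin : ({x ∈ 𝒲 | x.1 ⊆ Q qs ∧ x.2 ≤ i - 1}).Finite :=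
            hRP.finite.subset (Set.sep_subset _ _)
          have hdisjLR : Disjoint
              ((fun k : Fin h => ((Q k, i - 1) : Set V × ℤ)) '' {k : Fin h | (k : ℕ) < s})
              {x ∈ 𝒲 | x.1 ⊆ Q qs ∧ x.2 ≤ i - 1} := by
            rw [Set.disjoint_left]
            rintro x ⟨k, hks, rfl⟩ ⟨-, hsub, -⟩
            have hkqs : k ≠ qs := by
              intro hEq
              rw [hEq] at hks
              simp [hqs] at hks
            obtain ⟨v, hv⟩ := G.parts_nonempty (hQparts k).1
            exact Set.disjoint_left.1 (hQdisj k qs hkqs) hv (hsub hv)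
          have hinjOn : Set.InjOn (fun k : Fin h => ((Q k, i - 1) : Set V × ℤ))
              {k : Fin h | (k : ℕ) < s} := by
            intro a _ b _ hab
            exact hQinj (congrArg Prod.fst hab)
          have hsetc : {k : Fin h | (k : ℕ) < s}
              = ↑(Finset.univ.filter (fun k : Fin h => (k : ℕ) < s)) := by
            ext k; simp
          have hgWdec : gW G w U 𝒲 i A
              = (∑ k ∈ Finset.univ.filter (fun k : Fin h => (k : ℕ) < s),
                  gfun G w U (i - 1) (Q k)) + gW G w U 𝒲 (i - 1) (Q qs) := by
            rw [gW, hMeq, finsum_mem_union hdisjLR hLfin hRfin]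
            congr 1
            rw [finsum_mem_image hinjOn, hsetc, finsum_mem_coe_finset]
          have hkWdec : kappaW G w c U 𝒲 i A
              = (∑ k ∈ Finset.univ.filter (fun k : Fin h => (k : ℕ) < s),
                  kappa G w c U (i - 1) (Q k)) + kappaW G w c U 𝒲 (i - 1) (Q qs) := by
            rw [kappaW, hMeq, finsum_mem_union hdisjLR hLfin hRfin]
            congr 1
            rw [finsum_mem_image hinjOn, hsetc, finsum_mem_coe_finset]
          have hIH := ihm (i - 1) (by omega) (by omega) (Q qs) (hQparts qs).1
          have hkWle : kappaW G w c U 𝒲 (i - 1) (Q qs) ≤ kappa G w c U (i - 1) (Q qs) :=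
            kappaW_le_kappa G w c U hRP (i - 1) (Q qs) (fun _ _ _ h => h)
          have halg := key_algebra hs (fun k => gfun G w U (i - 1) (Q k))
            (fun k => kappa G w c U (i - 1) (Q k))
            (fun j k hjk => hsorted j k hjk)
            (gW G w U 𝒲 (i - 1) (Q qs)) (kappaW G w c U 𝒲 (i - 1) (Q qs))
            (kappa G w c U i A) (beta i) (beta (i - 1))
            (beta_db hi0) hIH hkWle hKA
          rw [hgWdec, hkWdec, hgdec, ← beta_of_nonneg hi0]
          calc ((∑ k ∈ Finset.univ.filter (fun k : Fin h => (k : ℕ) < s),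
                  kappa G w c U (i - 1) (Q k)) + kappaW G w c U 𝒲 (i - 1) (Q qs))
                * ((∑ k, gfun G w U (i - 1) (Q k)) + beta i)
              ≤ _ := halg
          _ = _ := by ring
        · -- `s = h`: all the children are taken, and there is nothing deeper
          have hsh' : s = h := by omega
          have hMeq : {x ∈ 𝒲 | x.1 ⊆ A ∧ x.2 ≤ i}
              = ((fun k : Fin h => ((Q k, i - 1) : Set V × ℤ)) '' Set.univ) := by
            ext x
            simp only [Set.mem_setOf_eq, Set.mem_image, Set.mem_univ, true_and]
            constructor
            · rintro ⟨hx𝒲, hxA, hxlev⟩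
              rcases hmem_cases x hx𝒲 hxA hxlev with ⟨k, hks, hxpair⟩ | hdeeplev
              · exact ⟨k, hxpair.symm⟩
              · obtain ⟨hs', -⟩ := hdeep x hx𝒲 hdeeplev
                omega
            · rintro ⟨k, rfl⟩
              exact ⟨hpreW k (by omega), (hQparts k).2, by omega⟩
          have hinjOn : Set.InjOn (fun k : Fin h => ((Q k, i - 1) : Set V × ℤ))
              Set.univ := fun a _ b _ hab => hQinj (congrArg Prod.fst hab)
          have huc : (Set.univ : Set (Fin h)) = ↑(Finset.univ : Finset (Fin h)) := by
            ext k; simp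
          have hgWdec : gW G w U 𝒲 i A = ∑ k, gfun G w U (i - 1) (Q k) := by
            rw [gW, hMeq, finsum_mem_image hinjOn, huc, finsum_mem_coe_finset]
          have hkWdec : kappaW G w c U 𝒲 i A = ∑ k, kappa G w c U (i - 1) (Q k) := by
            rw [kappaW, hMeq, finsum_mem_image hinjOn, huc, finsum_mem_coe_finset]
          rw [hgWdec, hkWdec, hgdec, ← beta_of_nonneg hi0]
          set K := ∑ k, kappa G w c U (i-1) (Q k) with hK
          set Gs := ∑ k, gfun G w U (i-1) (Q k) with hGs
          calc K * (Gs + beta i) = K * Gs + beta i * K := by ring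
            _ ≤ Gs * kappa G w c U i A + beta i * kappa G w c U i A := by
                have e1 : K * Gs ≤ Gs * kappa G w c U i A := by
                  rw [mul_comm]
                  exact Nat.mul_le_mul_left _ hKA
                have e2 : beta i * K ≤ beta i * kappa G w c U i A :=
                  Nat.mul_le_mul_left _ hKA
                omega
            _ ≤ Gs * kappa G w c U i A + beta i * kappa G w c U i A + beta i * K :=
                Nat.le_add_right _ _

/-- (L10) The cost of the removal set is at most `κ_p^𝒲(V)`. -/
lemma removal_le_kappaW (p : ℕ) (𝒲 : Set (Set V × ℤ))
    (hRP : IsRemovalPattern G w U p 𝒲) :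
    setSum c (removalSet G w U 𝒲) ≤ kappaW G w c U 𝒲 (p : ℤ) Set.univ := by
  classical
  have hM : {x ∈ 𝒲 | x.1 ⊆ Set.univ ∧ x.2 ≤ (p : ℤ)} = 𝒲 := by
    ext x
    simp only [Set.mem_setOf_eq, Set.subset_univ, true_and]
    exact ⟨fun hx => hx.1, fun hx => ⟨hx, by have := (hRP.levels x hx).2; omega⟩⟩
  rw [kappaW, hM, finsum_mem_eq_sum_of_mem_iff _ (fun x => hRP.finite.mem_toFinset)]
  rw [setSum_eq_sum]
  have hrw : ∀ x ∈ hRP.finite.toFinset, kappa G w c U x.2 x.1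
      = ∑ e : E, if e ∈ U ∩ Ele w x.2 then c e * endsIn G x.1 e else 0 :=
    fun x _ => kappa_eq_sum G w c U x.2 x.1
  rw [Finset.sum_congr rfl hrw, Finset.sum_comm]
  refine Finset.sum_le_sum fun e _ => ?_
  by_cases he : e ∈ removalSet G w U 𝒲
  · rw [if_pos he]
    obtain ⟨x0, hx0𝒲, hm, hone⟩ := he
    have hx0F : x0 ∈ hRP.finite.toFinset := hRP.finite.mem_toFinset.mpr hx0𝒲
    have hterm : c e ≤ if e ∈ U ∩ Ele w x0.2 then c e * endsIn G x0.1 e else 0 := by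
      rw [if_pos hm]
      have hends : 1 ≤ endsIn G x0.1 e := by
        unfold endsIn
        rcases hone with ⟨h1, -⟩ | ⟨-, h2⟩
        · rw [if_pos h1]; omega
        · rw [if_pos h2]; omega
      calc c e = c e * 1 := (mul_one _).symm
        _ ≤ c e * endsIn G x0.1 e := Nat.mul_le_mul_left _ hends
    exact hterm.trans (Finset.single_le_sum (f := fun x =>
      if e ∈ U ∩ Ele w x.2 then c e * endsIn G x.1 e else 0)
      (fun x _ => Nat.zero_le _) hx0F)
  · rw [if_neg he]
    exact Nat.zero_le _

end Aux

/-- For an efficient removal pattern `𝒲` with removal set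
`R = R(𝒲)`, if `U ≠ ∅` then `g_p^𝒲(V) ≥ (1/2)·(c(R)/c(U))·val(U) − 2^p`. -/
theorem gW_lower_bound
    (G : Multigraph V E) (w : E → ℕ) (c : E → ℕ) (hc : ∀ e, 0 < c e)
    (p : ℕ) (hp : 1 ≤ p)
    (hw : ∀ e, w e = 0 ∨ ∃ i ≤ p, w e = 2 ^ i)
    (hEp : G.Connects {e | w e = 2 ^ p})
    (U : Set E) (hU : U ⊆ Ele w ((p : ℤ) - 1)) (hUne : U.Nonempty)
    (𝒲 : Set (Set V × ℤ))
    (hRP : IsRemovalPattern G w U p 𝒲)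
    (hEff : IsEfficient G w c U p 𝒲) :
    (1 / 2 : ℝ) * ((setSum c (removalSet G w U 𝒲) : ℝ) / (setSum c U : ℝ))
        * (G.val w U : ℝ) - 2 ^ p
      ≤ (gW G w U 𝒲 (p : ℤ) Set.univ : ℝ) := by
  classical
  obtain ⟨e0, he0⟩ := hUne
  have hV : Nonempty V := ⟨G.fst e0⟩
  have hsub2p : {e | w e = 2 ^ p} ⊆ Ele w (p : ℤ) \ U := by
    intro e he
    refine ⟨Or.inr ⟨p, le_rfl, he⟩, fun heU => ?_⟩
    rcases hU heU with h0 | ⟨ℓ, hℓ, hwe⟩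
    · rw [Set.mem_setOf_eq] at he; rw [he] at h0
      simp at h0
    · rw [Set.mem_setOf_eq] at he
      rw [he] at hwe
      have := Nat.pow_right_injective (le_refl 2) hwe
      omega
  have huniv : (Set.univ : Set V) ∈ G.parts (Ele w (p : ℤ) \ U) := by
    refine ⟨G.fst e0, ?_⟩
    ext u
    simp only [Set.mem_univ, true_iff]
    show Relation.EqvGen _ _ _
    exact G.eqvGen_mono hsub2p (hEp _ u)
  have hbp : beta (p : ℤ) = 2 ^ p := by
    rw [beta_of_nonneg (Int.natCast_nonneg p), Int.toNat_natCast]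
  have hclaim := claim_invariant G w c U p 𝒲 hRP hEff (p + 1) (p : ℤ)
    (by push_cast; ring) le_rfl Set.univ huniv
  rw [hbp] at hclaim
  have hkp : kappa G w c U (p : ℤ) Set.univ = 2 * setSum c U := by
    unfold kappa
    have h1 : {e | e ∈ U ∩ Ele w (p : ℤ) ∧ G.oneEnd Set.univ e} = ∅ := by
      ext e
      simp [Multigraph.oneEnd]
    have h2 : {e | e ∈ U ∩ Ele w (p : ℤ) ∧ G.twoEnds Set.univ e} = U := by
      ext e
      simp only [Set.mem_setOf_eq, Multigraph.twoEnds, Set.mem_univ, and_true,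
        Set.mem_inter_iff]
      exact ⟨fun h => h.1, fun h => ⟨h, Ele_mono w (by omega) (hU h)⟩⟩
    rw [h1, h2, setSum_zero_of c ∅ (fun e he => absurd he (Set.notMem_empty e))]
    ring
  have hcR := removal_le_kappaW G w c U p 𝒲 hRP
  have hvg := val_le G w U p hEp hU hV
  rw [hkp] at hclaim
  -- the purely arithmetic part, in ℕ
  set a := gW G w U 𝒲 (p : ℤ) Set.univ with ha
  set kW := kappaW G w c U 𝒲 (p : ℤ) Set.univ with hkW
  set g := gfun G w U (p : ℤ) Set.univ with hg
  set v := G.val w U with hv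
  set r := setSum c (removalSet G w U 𝒲) with hr
  set cU := setSum c U with hcU
  have e1 : r * v ≤ kW * v := Nat.mul_le_mul_right v hcR
  have e2 : kW * v + 2 ^ p * kW + 2 ^ p * kW = kW * (v + 2 ^ p + 2 ^ p) := by ring
  have e3 : kW * (v + 2 ^ p + 2 ^ p) ≤ kW * g := Nat.mul_le_mul_left _ hvg
  have hmain : r * v ≤ a * (2 * cU) + 2 ^ p * (2 * cU) := by omega
  -- now pass to the reals
  have hcUpos : 0 < cU := lt_of_lt_of_le (hc e0) (le_setSum c he0)
  have hcUposR : (0 : ℝ) < (cU : ℝ) := by exact_mod_cast hcUpos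
  rw [sub_le_iff_le_add]
  have hdiv : (1 / 2 : ℝ) * ((r : ℝ) / (cU : ℝ)) * (v : ℝ)
      = ((r : ℝ) * (v : ℝ)) / (2 * (cU : ℝ)) := by ring
  rw [hdiv, div_le_iff₀ (by positivity)]
  have hfinal : (r * v : ℕ) ≤ (a + 2 ^ p) * (2 * cU) := by
    calc (r * v : ℕ) ≤ a * (2 * cU) + 2 ^ p * (2 * cU) := hmain
      _ = (a + 2 ^ p) * (2 * cU) := by ring
  calc ((r : ℝ) * (v : ℝ)) ≤ (((a + 2 ^ p) * (2 * cU) : ℕ) : ℝ) := by exact_mod_cast hfinal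
    _ = ((a : ℝ) + 2 ^ p) * (2 * (cU : ℝ)) := by push_cast; ring

end Patterns

end MSTInterdiction
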